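/- arXiv:1710.11008 — 3 statements merged into one kernel-verified Lean document; each statement's English description precedes it below -/
import Mathlib

section
/- Two solutions Σ_t and Σ'_t of the scalar Riccati equation dΣ/dt = 2AΣ + σ_B² − C²Σ² with positive initial conditions satisfy |Σ_t − Σ'_t| ≤ β e^{−2λ₀ t} |Σ_0 − Σ'_0| for all t ≥ 0, where λ₀ = √(A² + σ_B²C²) and β = (2λ₀/(λ₀ − A))². -/
open Set Real

lemma riccati_sol_lower (A C σB lam0 : ℝ)
    (hlam_sq : lam0 ^ 2 = A ^ 2 + σB ^ 2 * C ^ 2)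
    (hlam_pos : 0 < lam0) (hAlt : A < lam0) (hAgt : -lam0 < A)
    (Sig : ℝ → ℝ) (hSig0 : Sig 0 > 0) (hCS : 0 < C ^ 2)
    (hode : ∀ t ≥ (0:ℝ), HasDerivAt Sig (2 * A * Sig t + σB ^ 2 - C ^ 2 * (Sig t) ^ 2) t) :
    ∃ u : ℝ → ℝ, u 0 = 1 ∧ Continuous u ∧ (∀ s, 0 < u s) ∧
      (∀ s ≥ (0:ℝ), HasDerivWithinAt u (C ^ 2 * Sig s * u s) (Set.Ici s) s) ∧
      (∀ s ≥ (0:ℝ), ((lam0 - A) / (2 * lam0)) * Real.exp ((A + lam0) * s) ≤ u s) := by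
  set g : ℝ → ℝ := fun s => Sig (max s 0) with hg_def
  have hg_eq : ∀ s ≥ (0:ℝ), g s = Sig s := fun s hs => by simp [hg_def, max_eq_left hs]
  have hg_cont : Continuous g := by
    rw [continuous_iff_continuousAt]
    intro s
    have h1 : ContinuousAt (fun y : ℝ => max y 0) s :=
      (continuous_id.max continuous_const).continuousAt
    exact ContinuousAt.comp (hode _ (le_max_right s 0)).continuousAt h1
  set F : ℝ → ℝ := fun s => ∫ x in (0:ℝ)..s, g x with hF_def
  have hF : ∀ s : ℝ, HasDerivAt F (g s) s := by
    intro s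
    exact intervalIntegral.integral_hasDerivAt_right
      (hg_cont.intervalIntegrable _ _)
      (hg_cont.stronglyMeasurableAtFilter _ _)
      hg_cont.continuousAt
  set u : ℝ → ℝ := fun s => Real.exp (C ^ 2 * F s) with hu_def
  have hu0 : u 0 = 1 := by simp [hu_def, hF_def]
  have hu_pos : ∀ s, 0 < u s := fun s => Real.exp_pos _
  have hu_cont : Continuous u := by
    apply Real.continuous_exp.comp
    apply Continuous.mul continuous_const
    rw [continuous_iff_continuousAt]
    exact fun s => (hF s).continuousAt
  have hu_deriv : ∀ s : ℝ, HasDerivAt u (C ^ 2 * g s * u s) s := by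
    intro s
    have := (((hF s).const_mul (C ^ 2)).exp)
    convert this using 1
    ring
  have hu_derivW : ∀ s ≥ (0:ℝ), HasDerivWithinAt u (C ^ 2 * Sig s * u s) (Set.Ici s) s := by
    intro s hs
    have := (hu_deriv s).hasDerivWithinAt (s := Set.Ici s)
    rwa [hg_eq s hs] at this
  have hg_deriv : ∀ s ≥ (0:ℝ), HasDerivWithinAt g
      (2 * A * Sig s + σB ^ 2 - C ^ 2 * (Sig s) ^ 2) (Set.Ici s) s := by
    intro s hs
    refine ((hode s hs).hasDerivWithinAt).congr (fun x hx => hg_eq x (le_trans hs hx))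
      (hg_eq s hs)
  set q : ℝ → ℝ := fun s => (C ^ 2 * g s - (A - lam0)) * u s with hq_def
  set q0 : ℝ := C ^ 2 * Sig 0 - A + lam0 with hq0_def
  have hq0 : q 0 = q0 := by
    simp [hq_def, hu0, hg_eq 0 le_rfl, hq0_def]; ring
  have hq_cont : Continuous q :=
    ((continuous_const.mul hg_cont).sub continuous_const).mul hu_cont
  have hq_deriv : ∀ s ≥ (0:ℝ), HasDerivWithinAt q ((A + lam0) * q s) (Set.Ici s) s := by
    intro s hs
    have h1 := (((hg_deriv s hs).const_mul (C ^ 2)).sub_const (A - lam0)).fun_mul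
      (hu_derivW s hs)
    refine h1.congr_deriv ?_
    symm
    rw [hq_def]
    simp only [hg_eq s hs]
    linear_combination (u s) * hlam_sq
  have hq0_pos : lam0 - A < q0 := by
    have := mul_pos hCS hSig0
    simp only [hq0_def]; linarith
  have hq_eq : ∀ s ≥ (0:ℝ), q s = q0 * Real.exp ((A + lam0) * s) := by
    intro s hs
    set φ : ℝ → ℝ := fun x => q x * Real.exp (-(A + lam0) * x) with hφ_def
    have hφc : ContinuousOn φ (Icc 0 s) :=
      (hq_cont.mul (Real.continuous_exp.comp (continuous_const.mul continuous_id))).continuousOn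
    have hφd : ∀ x ∈ Ico (0:ℝ) s, HasDerivWithinAt φ 0 (Ici x) x := by
      intro x hx
      have h2 : HasDerivAt (fun y : ℝ => Real.exp (-(A + lam0) * y))
          (-(A + lam0) * Real.exp (-(A + lam0) * x)) x := by
        have := ((hasDerivAt_id x).const_mul (-(A + lam0))).exp
        simpa [id_eq, mul_comm] using this
      have h3 := (hq_deriv x hx.1).fun_mul h2.hasDerivWithinAt
      refine h3.congr_deriv ?_
      symm
      ring
    have hconst := constant_of_has_deriv_right_zero hφc hφd s (right_mem_Icc.mpr hs)
    have hkey : q s * Real.exp (-(A + lam0) * s) = q0 := by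
      simpa [hφ_def, hq0] using hconst
    have hz : (-(A + lam0) * s + (A + lam0) * s) = 0 := by ring
    calc q s = q s * Real.exp (-(A + lam0) * s) * Real.exp ((A + lam0) * s) := by
          rw [mul_assoc, ← Real.exp_add, hz, Real.exp_zero, mul_one]
      _ = q0 * Real.exp ((A + lam0) * s) := by rw [hkey]
  -- h function: u s * exp((lam0 - A) s) = (q0/(2 lam0)) exp(2 lam0 s) + 1 - q0/(2 lam0)
  have hu_eq : ∀ s ≥ (0:ℝ), u s * Real.exp ((lam0 - A) * s)
      = (q0 / (2 * lam0)) * Real.exp (2 * lam0 * s) + 1 - q0 / (2 * lam0) := by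
    intro s hs
    set h : ℝ → ℝ := fun x => u x * Real.exp ((lam0 - A) * x)
      - (q0 / (2 * lam0)) * Real.exp (2 * lam0 * x) with hh_def
    have hhc : ContinuousOn h (Icc 0 s) := by
      apply Continuous.continuousOn
      exact (hu_cont.mul (Real.continuous_exp.comp (continuous_const.mul continuous_id))).sub
        (continuous_const.mul (Real.continuous_exp.comp (continuous_const.mul continuous_id)))
    have hhd : ∀ x ∈ Ico (0:ℝ) s, HasDerivWithinAt h 0 (Ici x) x := by
      intro x hx
      have e1 : HasDerivAt (fun y : ℝ => Real.exp ((lam0 - A) * y))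
          ((lam0 - A) * Real.exp ((lam0 - A) * x)) x := by
        have := ((hasDerivAt_id x).const_mul (lam0 - A)).exp
        simpa [id_eq, mul_comm] using this
      have e2 : HasDerivAt (fun y : ℝ => Real.exp (2 * lam0 * y))
          (2 * lam0 * Real.exp (2 * lam0 * x)) x := by
        have := ((hasDerivAt_id x).const_mul (2 * lam0)).exp
        simpa [id_eq, mul_comm] using this
      have h3 := ((hu_derivW x hx.1).fun_mul e1.hasDerivWithinAt).sub
        ((e2.hasDerivWithinAt).const_mul (q0 / (2 * lam0)))
      refine h3.congr_deriv ?_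
      symm
      have hq := hq_eq x hx.1
      have hexp : Real.exp ((A + lam0) * x) * Real.exp ((lam0 - A) * x)
          = Real.exp (2 * lam0 * x) := by
        rw [← Real.exp_add]; ring_nf
      have hlam_ne : (2 * lam0) ≠ 0 := by positivity
      -- goal: 0 = (C²Σx u + u(lam0-A)) e^{(lam0-A)x} - (q0/(2lam0)) * 2lam0 e^{2lam0 x}
      have hqx : (C ^ 2 * Sig x - (A - lam0)) * u x = q0 * Real.exp ((A + lam0) * x) := by
        rw [← hq]; simp [hq_def, hg_eq x hx.1]
      have hdiv : q0 / (2 * lam0) * (2 * lam0 * Real.exp (2 * lam0 * x))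
          = q0 * Real.exp (2 * lam0 * x) := by
        rw [← mul_assoc, div_mul_cancel₀ _ hlam_ne]
      linear_combination -(Real.exp ((lam0 - A) * x)) * hqx - q0 * hexp + hdiv
    have hconst := constant_of_has_deriv_right_zero hhc hhd s (right_mem_Icc.mpr hs)
    have h0 : h 0 = 1 - q0 / (2 * lam0) := by simp [hh_def, hu0]
    have := hconst
    rw [h0] at this
    simp only [hh_def] at this
    linarith [this]
  -- final bound
  refine ⟨u, hu0, hu_cont, hu_pos, hu_derivW, ?_⟩
  intro s hs
  have hE1 : (1:ℝ) ≤ Real.exp (2 * lam0 * s) := by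
    rw [← Real.exp_zero]
    exact Real.exp_le_exp.mpr (by positivity)
  have hkey : ((lam0 - A) / (2 * lam0)) * Real.exp (2 * lam0 * s)
      ≤ u s * Real.exp ((lam0 - A) * s) := by
    rw [hu_eq s hs, ← sub_nonneg]
    have hid : q0 / (2 * lam0) * Real.exp (2 * lam0 * s) + 1 - q0 / (2 * lam0)
        - (lam0 - A) / (2 * lam0) * Real.exp (2 * lam0 * s)
        = (C ^ 2 * Sig 0 * (Real.exp (2 * lam0 * s) - 1) + (lam0 + A)) / (2 * lam0) := by
      rw [hq0_def]; field_simp; ring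
    rw [hid]
    have h1 : 0 ≤ C ^ 2 * Sig 0 * (Real.exp (2 * lam0 * s) - 1) :=
      mul_nonneg (le_of_lt (mul_pos hCS hSig0)) (by linarith)
    apply div_nonneg _ (by positivity)
    linarith
  have hexp2 : Real.exp ((A + lam0) * s) * Real.exp ((lam0 - A) * s)
      = Real.exp (2 * lam0 * s) := by rw [← Real.exp_add]; ring_nf
  have hepos : 0 < Real.exp ((lam0 - A) * s) := Real.exp_pos _
  rw [← mul_le_mul_iff_left₀ hepos]
  calc ((lam0 - A) / (2 * lam0)) * Real.exp ((A + lam0) * s) * Real.exp ((lam0 - A) * s)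
      = ((lam0 - A) / (2 * lam0)) * Real.exp (2 * lam0 * s) := by
        rw [mul_assoc, hexp2]
    _ ≤ u s * Real.exp ((lam0 - A) * s) := hkey

/-- Two solutions of the scalar Riccati equation with positive initial conditions
contract exponentially: `|Σ_t − Σ'_t| ≤ β e^{−2λ₀ t} |Σ_0 − Σ'_0|`. -/
theorem scalar_riccati_contraction
    (A C σB : ℝ) (hC : C ≠ 0) (hσ : σB ≠ 0)
    (lam0 β : ℝ)
    (hlam0 : lam0 = Real.sqrt (A ^ 2 + σB ^ 2 * C ^ 2))
    (hβ : β = (2 * lam0 / (lam0 - A)) ^ 2)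
    (Sig Sig' : ℝ → ℝ)
    (hSig0 : Sig 0 > 0) (hSig'0 : Sig' 0 > 0)
    (hode : ∀ t ≥ (0:ℝ), HasDerivAt Sig (2 * A * Sig t + σB ^ 2 - C ^ 2 * (Sig t) ^ 2) t)
    (hode' : ∀ t ≥ (0:ℝ), HasDerivAt Sig' (2 * A * Sig' t + σB ^ 2 - C ^ 2 * (Sig' t) ^ 2) t) :
    ∀ t ≥ (0:ℝ), |Sig t - Sig' t| ≤ β * Real.exp (-2 * lam0 * t) * |Sig 0 - Sig' 0| := by
  have hCS : 0 < C ^ 2 := by positivity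
  have hσC : 0 < σB ^ 2 * C ^ 2 := by positivity
  have hlam_sq : lam0 ^ 2 = A ^ 2 + σB ^ 2 * C ^ 2 := by
    rw [hlam0]; exact Real.sq_sqrt (by positivity)
  have hlam_pos : 0 < lam0 := by
    rw [hlam0]; exact Real.sqrt_pos.mpr (by positivity)
  have hAlt : A < lam0 := by nlinarith [sq_nonneg (A - lam0), sq_nonneg (A + lam0)]
  have hAgt : -lam0 < A := by nlinarith [sq_nonneg (A - lam0), sq_nonneg (A + lam0)]
  obtain ⟨u, hu0, hu_cont, hu_pos, hu_deriv, hu_lb⟩ :=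
    riccati_sol_lower A C σB lam0 hlam_sq hlam_pos hAlt hAgt Sig hSig0 hCS hode
  obtain ⟨v, hv0, hv_cont, hv_pos, hv_deriv, hv_lb⟩ :=
    riccati_sol_lower A C σB lam0 hlam_sq hlam_pos hAlt hAgt Sig' hSig'0 hCS hode'
  intro t ht
  set c : ℝ := (lam0 - A) / (2 * lam0) with hc_def
  have hc_pos : 0 < c := by apply div_pos <;> linarith
  set P : ℝ → ℝ := fun s => (Sig s - Sig' s) * (u s * v s) * Real.exp (-(2 * A) * s)
    with hP_def
  have hSc : ContinuousOn Sig (Icc 0 t) :=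
    fun x hx => (hode x hx.1).continuousAt.continuousWithinAt
  have hS'c : ContinuousOn Sig' (Icc 0 t) :=
    fun x hx => (hode' x hx.1).continuousAt.continuousWithinAt
  have hPc : ContinuousOn P (Icc 0 t) := by
    apply ContinuousOn.mul
    · exact (hSc.sub hS'c).mul (hu_cont.continuousOn.mul hv_cont.continuousOn)
    · exact (Real.continuous_exp.comp (continuous_const.mul continuous_id)).continuousOn
  have hPd : ∀ x ∈ Ico (0:ℝ) t, HasDerivWithinAt P 0 (Ici x) x := by
    intro x hx
    have d1 : HasDerivWithinAt (fun s => Sig s - Sig' s)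
        ((2 * A * Sig x + σB ^ 2 - C ^ 2 * (Sig x) ^ 2)
          - (2 * A * Sig' x + σB ^ 2 - C ^ 2 * (Sig' x) ^ 2)) (Ici x) x :=
      (hode x hx.1).hasDerivWithinAt.sub (hode' x hx.1).hasDerivWithinAt
    have d2 : HasDerivWithinAt (fun s => u s * v s)
        (C ^ 2 * Sig x * u x * v x + u x * (C ^ 2 * Sig' x * v x)) (Ici x) x :=
      (hu_deriv x hx.1).mul (hv_deriv x hx.1)
    have d3 : HasDerivAt (fun s : ℝ => Real.exp (-(2 * A) * s))
        (-(2 * A) * Real.exp (-(2 * A) * x)) x := by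
      have := ((hasDerivAt_id x).const_mul (-(2 * A))).exp
      simpa [id_eq, mul_comm] using this
    have h3 := (d1.fun_mul d2).fun_mul d3.hasDerivWithinAt
    refine h3.congr_deriv ?_
    symm
    ring
  have hconst := constant_of_has_deriv_right_zero hPc hPd t (right_mem_Icc.mpr ht)
  have hP0 : P 0 = Sig 0 - Sig' 0 := by simp [hP_def, hu0, hv0]
  rw [hP0] at hconst
  -- absolute values
  have hKpos : 0 < u t * v t * Real.exp (-(2 * A) * t) := by
    have := hu_pos t; have := hv_pos t; positivity
  have habs_eq : |Sig t - Sig' t| * (u t * v t * Real.exp (-(2 * A) * t))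
      = |Sig 0 - Sig' 0| := by
    rw [← abs_of_pos hKpos, ← abs_mul]
    rw [show (Sig t - Sig' t) * (u t * v t * Real.exp (-(2 * A) * t)) = P t by
      simp [hP_def]; ring, hconst]
  -- lower bound for the K factor
  have hlb : c ^ 2 * Real.exp (2 * lam0 * t) ≤ u t * v t * Real.exp (-(2 * A) * t) := by
    have h1 : c * Real.exp ((A + lam0) * t) * (c * Real.exp ((A + lam0) * t))
        ≤ u t * v t := by
      apply mul_le_mul (hu_lb t ht) (hv_lb t ht) (by positivity)
        (le_of_lt (hu_pos t))
    have h2 : c * Real.exp ((A + lam0) * t) * (c * Real.exp ((A + lam0) * t))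
        * Real.exp (-(2 * A) * t) = c ^ 2 * Real.exp (2 * lam0 * t) := by
      rw [show c * Real.exp ((A + lam0) * t) * (c * Real.exp ((A + lam0) * t))
          * Real.exp (-(2 * A) * t)
        = c ^ 2 * (Real.exp ((A + lam0) * t) * Real.exp ((A + lam0) * t)
          * Real.exp (-(2 * A) * t)) by ring]
      rw [← Real.exp_add, ← Real.exp_add,
        show ((A + lam0) * t + (A + lam0) * t + -(2 * A) * t) = 2 * lam0 * t by ring]
    calc c ^ 2 * Real.exp (2 * lam0 * t)
        = c * Real.exp ((A + lam0) * t) * (c * Real.exp ((A + lam0) * t))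
          * Real.exp (-(2 * A) * t) := h2.symm
      _ ≤ u t * v t * Real.exp (-(2 * A) * t) := by
          apply mul_le_mul_of_nonneg_right h1 (le_of_lt (Real.exp_pos _))
  -- conclusion
  have hone : 1 ≤ β * Real.exp (-2 * lam0 * t)
      * (u t * v t * Real.exp (-(2 * A) * t)) := by
    have hβc : β * c ^ 2 = 1 := by
      rw [hβ, hc_def, div_pow, div_pow, div_mul_div_comm]
      rw [div_eq_one_iff_eq (ne_of_gt (mul_pos
        (pow_pos (by linarith : (0:ℝ) < lam0 - A) 2)
        (pow_pos (by linarith : (0:ℝ) < 2 * lam0) 2)))]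
      ring
    have hexp1 : Real.exp (-2 * lam0 * t) * Real.exp (2 * lam0 * t) = 1 := by
      rw [← Real.exp_add, show (-2 * lam0 * t + 2 * lam0 * t) = 0 by ring, Real.exp_zero]
    have hβpos : 0 < β := by
      rw [hβ]
      apply pow_pos
      apply div_pos <;> linarith
    calc (1:ℝ) = β * Real.exp (-2 * lam0 * t) * (c ^ 2 * Real.exp (2 * lam0 * t)) := by
          rw [show β * Real.exp (-2 * lam0 * t) * (c ^ 2 * Real.exp (2 * lam0 * t))
            = (β * c ^ 2) * (Real.exp (-2 * lam0 * t) * Real.exp (2 * lam0 * t)) by ring,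
            hβc, hexp1, mul_one]
      _ ≤ β * Real.exp (-2 * lam0 * t) * (u t * v t * Real.exp (-(2 * A) * t)) := by
          apply mul_le_mul_of_nonneg_left hlb (by positivity)
  calc |Sig t - Sig' t| = |Sig t - Sig' t| * 1 := (mul_one _).symm
    _ ≤ |Sig t - Sig' t| * (β * Real.exp (-2 * lam0 * t)
        * (u t * v t * Real.exp (-(2 * A) * t))) :=
        mul_le_mul_of_nonneg_left hone (abs_nonneg _)
    _ = β * Real.exp (-2 * lam0 * t)
        * (|Sig t - Sig' t| * (u t * v t * Real.exp (-(2 * A) * t))) := by ring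
    _ = β * Real.exp (-2 * lam0 * t) * |Sig 0 - Sig' 0| := by rw [habs_eq]
end

section
/- The matrix Riccati solution Σ_t = Σ_∞ + e^{F_∞ t} D_t^{-1} e^{F_∞^⊤ t}, where D_t = (Σ_0 − Σ_∞)^{-1} + ∫_0^t e^{F_∞^⊤ s} C^⊤ C e^{F_∞ s} ds and F_∞ = A − Σ_∞ C^⊤ C, satisfies dΣ_t/dt = AΣ_t + Σ_t A^⊤ + σ_B σ_B^⊤ − Σ_t C^⊤ C Σ_t with initial value Σ_0. -/
section RiccatiAux
open Matrix NormedSpace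

attribute [local instance] Matrix.linftyOpNormedRing Matrix.linftyOpNormedAlgebra

theorem matrix_hasDerivAt_transfer {d : ℕ} {f : ℝ → Matrix (Fin d) (Fin d) ℝ}
    {f' : Matrix (Fin d) (Fin d) ℝ} {t : ℝ} :
    HasDerivAt f f' t ↔
      @HasDerivAt ℝ _ _ _ _ (Matrix.normedAddCommGroup (n := Fin d) (m := Fin d) (α := ℝ)).toUniformSpace.toTopologicalSpace _ f f' t := by
  exact Iff.rfl

theorem matrix_exp_continuous {d : ℕ} (X : Matrix (Fin d) (Fin d) ℝ) :
    Continuous fun s : ℝ => NormedSpace.exp (s • X) :=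
  continuous_iff_continuousAt.2 fun s => (hasDerivAt_exp_smul_const X s).continuousAt

open NormedSpace in
theorem riccati_deriv_aux {d m : ℕ}
    (A σB : Matrix (Fin d) (Fin d) ℝ) (C : Matrix (Fin m) (Fin d) ℝ)
    (SigInf : Matrix (Fin d) (Fin d) ℝ) (hSigInfSymm : SigInf.IsSymm)
    (hARE : A * SigInf + SigInf * Aᵀ + σB * σBᵀ - SigInf * Cᵀ * C * SigInf = 0)
    (Finf : Matrix (Fin d) (Fin d) ℝ) (hFinf : Finf = A - SigInf * Cᵀ * C)
    (D : ℝ → Matrix (Fin d) (Fin d) ℝ) (t : ℝ)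
    (hD' : HasDerivAt D (NormedSpace.exp (t • Finfᵀ) * Cᵀ * C * NormedSpace.exp (t • Finf)) t)
    (hDu : IsUnit (D t))
    (Sig : ℝ → Matrix (Fin d) (Fin d) ℝ)
    (hSig : ∀ s : ℝ, Sig s = SigInf + NormedSpace.exp (s • Finf) * (D s)⁻¹ * NormedSpace.exp (s • Finfᵀ)) :
    HasDerivAt Sig (A * Sig t + Sig t * Aᵀ + σB * σBᵀ - Sig t * Cᵀ * C * Sig t) t := by
  obtain ⟨u, hu⟩ := hDu
  have hE : HasDerivAt (fun s : ℝ => NormedSpace.exp (s • Finf)) (Finf * NormedSpace.exp (t • Finf)) t :=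
    hasDerivAt_exp_smul_const' Finf t
  have hET : HasDerivAt (fun s : ℝ => NormedSpace.exp (s • Finfᵀ)) (NormedSpace.exp (t • Finfᵀ) * Finfᵀ) t :=
    hasDerivAt_exp_smul_const Finfᵀ t
  have hInv : HasDerivAt (fun s : ℝ => (D s)⁻¹)
      (-((D t)⁻¹ * (NormedSpace.exp (t • Finfᵀ) * Cᵀ * C * NormedSpace.exp (t • Finf)) * (D t)⁻¹)) t := by
    have hfd := hasFDerivAt_ringInverse (𝕜 := ℝ) u
    rw [hu] at hfd
    have h2 := hfd.comp_hasDerivAt t hD'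
    simp only [ContinuousLinearMap.neg_apply, ContinuousLinearMap.mulLeftRight_apply] at h2
    have hcoe : (↑u⁻¹ : Matrix (Fin d) (Fin d) ℝ) = (D t)⁻¹ := by
      rw [Matrix.coe_units_inv, hu]
    rw [hcoe] at h2
    simp only [Matrix.nonsing_inv_eq_ringInverse] at h2 ⊢
    exact h2
  have hM := (hE.mul hInv).mul hET
  have hfull := ((hasDerivAt_const t SigInf).add hM).congr_of_eventuallyEq
    (Filter.Eventually.of_forall fun s => (hSig s))
  refine HasDerivAt.congr_deriv hfull ?_
  simp only [Pi.mul_apply]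
  have hFinfT : Finfᵀ = Aᵀ - Cᵀ * C * SigInf := by
    rw [hFinf, Matrix.transpose_sub, Matrix.transpose_mul, Matrix.transpose_mul,
      Matrix.transpose_transpose, hSigInfSymm, Matrix.mul_assoc]
  have hKey : σB * σBᵀ = SigInf * (Cᵀ * C) * SigInf - A * SigInf - SigInf * Aᵀ := by
    have h := sub_eq_zero.mp hARE
    rw [Matrix.mul_assoc SigInf Cᵀ C] at h
    rw [← h]; abel
  rw [hSig t]
  generalize NormedSpace.exp (t • Finf) = E
  generalize NormedSpace.exp (t • Finfᵀ) = ET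
  generalize (D t)⁻¹ = V
  rw [hFinfT, hFinf, hKey]
  rw [Matrix.mul_assoc SigInf Cᵀ C, Matrix.mul_assoc ET Cᵀ C,
    Matrix.mul_assoc (SigInf + E * V * ET) Cᵀ C]
  generalize Cᵀ * C = Q
  noncomm_ring

end RiccatiAux

attribute [local instance] Matrix.normedAddCommGroup Matrix.normedSpace

open Matrix NormedSpace

/-- The explicit formula `Σ_t = Σ_∞ + e^{F_∞ t} D_t^{-1} e^{F_∞^⊤ t}` solves the
matrix Riccati differential equation with initial value `Σ₀`. -/
theorem matrix_riccati_explicit_solution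
    {d m : ℕ}
    (A σB : Matrix (Fin d) (Fin d) ℝ) (C : Matrix (Fin m) (Fin d) ℝ)
    (SigInf : Matrix (Fin d) (Fin d) ℝ)
    (hSigInfPD : SigInf.PosDef) (hSigInfSymm : SigInf.IsSymm)
    (hARE : A * SigInf + SigInf * Aᵀ + σB * σBᵀ - SigInf * Cᵀ * C * SigInf = 0)
    (Sig0 : Matrix (Fin d) (Fin d) ℝ) (hSig0Symm : Sig0.IsSymm)
    (hSig0diff : IsUnit (Sig0 - SigInf))
    (Finf : Matrix (Fin d) (Fin d) ℝ) (hFinf : Finf = A - SigInf * Cᵀ * C)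
    (D : ℝ → Matrix (Fin d) (Fin d) ℝ)
    (hD : ∀ t : ℝ, D t = (Sig0 - SigInf)⁻¹ +
      ∫ s in (0:ℝ)..t, NormedSpace.exp (s • Finfᵀ) * Cᵀ * C * NormedSpace.exp (s • Finf))
    (hDunit : ∀ t ≥ (0:ℝ), IsUnit (D t))
    (Sig : ℝ → Matrix (Fin d) (Fin d) ℝ)
    (hSig : ∀ t : ℝ, Sig t = SigInf + NormedSpace.exp (t • Finf) * (D t)⁻¹ * NormedSpace.exp (t • Finfᵀ)) :
    Sig 0 = Sig0 ∧
    ∀ t ≥ (0:ℝ), HasDerivAt Sig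
      (A * Sig t + Sig t * Aᵀ + σB * σBᵀ - Sig t * Cᵀ * C * Sig t) t := by
  constructor
  · rw [hSig 0, hD 0]
    simp only [intervalIntegral.integral_same, add_zero, zero_smul, NormedSpace.exp_zero,
      Matrix.one_mul, Matrix.mul_one]
    rw [Matrix.nonsing_inv_nonsing_inv _ ((Matrix.isUnit_iff_isUnit_det _).mp hSig0diff)]
    abel
  · intro t ht
    have hcont : Continuous fun s : ℝ => NormedSpace.exp (s • Finfᵀ) * Cᵀ * C * NormedSpace.exp (s • Finf) :=
      (((matrix_exp_continuous Finfᵀ).matrix_mul continuous_const).matrix_mul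
        continuous_const).matrix_mul (matrix_exp_continuous Finf)
    have hDsup : HasDerivAt D (NormedSpace.exp (t • Finfᵀ) * Cᵀ * C * NormedSpace.exp (t • Finf)) t := by
      have h1 := (hcont.integral_hasStrictDerivAt 0 t).hasDerivAt
      have h2 := h1.const_add ((Sig0 - SigInf)⁻¹)
      exact h2.congr_of_eventuallyEq (Filter.Eventually.of_forall fun s => (hD s))
    exact matrix_hasDerivAt_transfer.mp
      (riccati_deriv_aux A σB C SigInf hSigInfSymm hARE Finf hFinf D t
        (matrix_hasDerivAt_transfer.mpr hDsup) (hDunit t ht) Sig hSig)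
end

section
/- Let X_t^i, i = 1,…,N, evolve by the deterministic linear FPF dynamics dX_t^i = A m_t^{(N)} dt + K_t^{(N)}(dZ_t − C m_t^{(N)} dt) + G_t^{(N)}(X_t^i − m_t^{(N)}) dt, where m_t^{(N)} = (1/N)Σ_i X_t^i, Σ_t^{(N)} = (1/(N−1))Σ_i (X_t^i − m_t^{(N)})(X_t^i − m_t^{(N)})^⊤, K_t^{(N)} = Σ_t^{(N)}C^⊤, and G_t^{(N)} = A − (1/2)K_t^{(N)}C + (1/2)σ_Bσ_B^⊤(Σ_t^{(N)})^{-1} + Ω_t(Σ_t^{(N)})^{-1} with Ω_t skew-symmetric. Then the empirical mean satisfies dm_t^{(N)} = A m_t^{(N)} dt + K_t^{(N)}(dZ_t − C m_t^{(N)} dt) and the empirical covariance satisfies the Riccati equation dΣ_t^{(N)}/dt = AΣ_t^{(N)} + Σ_t^{(N)}A^⊤ + σ_Bσ_B^⊤ − Σ_t^{(N)}C^⊤CΣ_t^{(N)}. -/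
attribute [local instance] Matrix.normedAddCommGroup Matrix.normedSpace

open Matrix

lemma mulVec_vecMulVec' {d : ℕ} (G : Matrix (Fin d) (Fin d) ℝ) (u v : Fin d → ℝ) :
    vecMulVec (G.mulVec u) v = G * vecMulVec u v := by
  ext i j
  simp [vecMulVec_apply, Matrix.mul_apply, Matrix.mulVec, dotProduct, Finset.sum_mul, mul_assoc]

lemma vecMulVec_mulVec' {d : ℕ} (G : Matrix (Fin d) (Fin d) ℝ) (u v : Fin d → ℝ) :
    vecMulVec u (G.mulVec v) = vecMulVec u v * Gᵀ := by
  ext i j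
  simp [vecMulVec_apply, Matrix.mul_apply, Matrix.mulVec, dotProduct, Finset.mul_sum,
    mul_comm, mul_left_comm]

lemma hasDerivAt_vecMulVec' {d : ℕ} {e : ℝ → Fin d → ℝ} {e' : Fin d → ℝ} {t : ℝ}
    (he : HasDerivAt e e' t) :
    HasDerivAt (fun s => vecMulVec (e s) (e s))
      (vecMulVec e' (e t) + vecMulVec (e t) e') t := by
  suffices H : @HasDerivAt ℝ _ (Fin d → Fin d → ℝ) _ _ _ _ (fun s i j => e s i * e s j)
      (fun i j => e' i * e t j + e t i * e' j) t from H
  rw [hasDerivAt_pi]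
  intro i
  rw [hasDerivAt_pi]
  intro j
  have hi := hasDerivAt_pi.mp he i
  have hj := hasDerivAt_pi.mp he j
  exact hi.mul hj

/-- For the finite-`N` deterministic linear FPF (driven by a common observation signal
with formal increment `z t = dZ_t/dt`), the empirical mean satisfies the Kalman filter
mean equation and the empirical covariance satisfies the Riccati equation. -/
theorem deterministic_FPF_mean_covariance_evolution
    {d m N : ℕ} (hN : 2 ≤ N)
    (A σB : Matrix (Fin d) (Fin d) ℝ) (C : Matrix (Fin m) (Fin d) ℝ)
    (z : ℝ → Fin m → ℝ)
    (Om : ℝ → Matrix (Fin d) (Fin d) ℝ) (hOm : ∀ t, (Om t)ᵀ = -(Om t))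
    (X : Fin N → ℝ → Fin d → ℝ)
    (mN : ℝ → Fin d → ℝ)
    (hmN : ∀ t, mN t = (N : ℝ)⁻¹ • ∑ i, X i t)
    (SigN : ℝ → Matrix (Fin d) (Fin d) ℝ)
    (hSigN : ∀ t, SigN t = ((N : ℝ) - 1)⁻¹ •
      ∑ i, vecMulVec (X i t - mN t) (X i t - mN t))
    (hSigNunit : ∀ t, IsUnit (SigN t))
    (KN : ℝ → Matrix (Fin d) (Fin m) ℝ) (hKN : ∀ t, KN t = SigN t * Cᵀ)
    (GN : ℝ → Matrix (Fin d) (Fin d) ℝ)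
    (hGN : ∀ t, GN t = A - (1/2 : ℝ) • (KN t * C) + (1/2 : ℝ) • (σB * σBᵀ * (SigN t)⁻¹)
      + Om t * (SigN t)⁻¹)
    (hdyn : ∀ i, ∀ t : ℝ, HasDerivAt (X i)
      (A.mulVec (mN t) + (KN t).mulVec (z t - C.mulVec (mN t))
        + (GN t).mulVec (X i t - mN t)) t) :
    (∀ t : ℝ, HasDerivAt mN
      (A.mulVec (mN t) + (KN t).mulVec (z t - C.mulVec (mN t))) t) ∧
    (∀ t : ℝ, HasDerivAt SigN
      (A * SigN t + SigN t * Aᵀ + σB * σBᵀ - SigN t * Cᵀ * C * SigN t) t) := by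
  have hNne : (N : ℝ) ≠ 0 := by
    have : (0 : ℕ) < N := lt_of_lt_of_le (by norm_num) hN
    exact_mod_cast this.ne'
  -- the centered particles sum to zero
  have hsum0 : ∀ t, (∑ i, (X i t - mN t)) = (0 : Fin d → ℝ) := by
    intro t
    have h1 : ∑ i : Fin N, (X i t - mN t) = (∑ i, X i t) - N • (mN t) := by
      rw [Finset.sum_sub_distrib, Finset.sum_const, Finset.card_univ, Fintype.card_fin]
    rw [h1, hmN, ← Nat.cast_smul_eq_nsmul ℝ, smul_smul, mul_inv_cancel₀ hNne, one_smul,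
      sub_self]
  -- derivative of the empirical mean
  have hmean : ∀ t : ℝ, HasDerivAt mN
      (A.mulVec (mN t) + (KN t).mulVec (z t - C.mulVec (mN t))) t := by
    intro t
    have hsum : HasDerivAt (fun s => ∑ i, X i s)
        (∑ i : Fin N, (A.mulVec (mN t) + (KN t).mulVec (z t - C.mulVec (mN t))
          + (GN t).mulVec (X i t - mN t))) t :=
      HasDerivAt.fun_sum (fun i _ => hdyn i t)
    have h2 := hsum.const_smul ((N : ℝ)⁻¹)
    have he : mN = fun s => (N : ℝ)⁻¹ • ∑ i, X i s := funext hmN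
    have hG : ∑ i : Fin N, (GN t).mulVec (X i t - mN t) = 0 := by
      have hm := map_sum ((GN t).mulVecLin) (fun i => X i t - mN t) Finset.univ
      simp only [Matrix.mulVecLin_apply] at hm
      rw [← hm, hsum0, Matrix.mulVec_zero]
    have hsumeq : (N : ℝ)⁻¹ • ∑ i : Fin N, (A.mulVec (mN t)
        + (KN t).mulVec (z t - C.mulVec (mN t)) + (GN t).mulVec (X i t - mN t))
        = A.mulVec (mN t) + (KN t).mulVec (z t - C.mulVec (mN t)) := by
      rw [Finset.sum_add_distrib, hG, add_zero, Finset.sum_const, Finset.card_univ,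
        Fintype.card_fin, ← Nat.cast_smul_eq_nsmul ℝ, smul_smul, inv_mul_cancel₀ hNne, one_smul]
    rw [hsumeq] at h2
    exact he.symm ▸ h2
  refine ⟨hmean, ?_⟩
  -- derivative of the centered particles
  have hedyn : ∀ i, ∀ t : ℝ, HasDerivAt (fun s => X i s - mN s)
      ((GN t).mulVec (X i t - mN t)) t := by
    intro i t
    have h := (hdyn i t).sub (hmean t)
    rwa [add_sub_cancel_left] at h
  -- derivative of the empirical covariance in terms of GN
  have hScov : ∀ t : ℝ, HasDerivAt SigN (GN t * SigN t + SigN t * (GN t)ᵀ) t := by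
    intro t
    have hterm : ∀ i : Fin N, HasDerivAt (fun s => vecMulVec (X i s - mN s) (X i s - mN s))
        (GN t * vecMulVec (X i t - mN t) (X i t - mN t)
          + vecMulVec (X i t - mN t) (X i t - mN t) * (GN t)ᵀ) t := by
      intro i
      have h := hasDerivAt_vecMulVec' (hedyn i t)
      rwa [mulVec_vecMulVec', vecMulVec_mulVec'] at h
    have hsum : HasDerivAt (fun s => ∑ i, vecMulVec (X i s - mN s) (X i s - mN s))
        (GN t * (∑ i, vecMulVec (X i t - mN t) (X i t - mN t))
          + (∑ i, vecMulVec (X i t - mN t) (X i t - mN t)) * (GN t)ᵀ) t := by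
      have h := HasDerivAt.fun_sum (fun i (_ : i ∈ Finset.univ) => hterm i)
      simp only [Finset.sum_add_distrib, Matrix.mul_sum, Matrix.sum_mul] at h ⊢
      exact h
    have he : SigN = fun s => ((N : ℝ) - 1)⁻¹ •
        ∑ i, vecMulVec (X i s - mN s) (X i s - mN s) := funext hSigN
    rw [he]
    have h2 := hsum.const_smul (((N : ℝ) - 1)⁻¹)
    simp only [Matrix.mul_smul, Matrix.smul_mul, ← smul_add]
    exact h2
  -- algebraic identity turning GN Σ + Σ GNᵀ into the Riccati right-hand side
  intro t
  have hSymm : (SigN t)ᵀ = SigN t := by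
    rw [hSigN, Matrix.transpose_smul]
    congr 1
    ext i j
    simp [Matrix.transpose_apply, Matrix.sum_apply, vecMulVec_apply, mul_comm]
  have hdet : IsUnit (SigN t).det := (Matrix.isUnit_iff_isUnit_det _).mp (hSigNunit t)
  have h1 : SigN t * (SigN t)⁻¹ = 1 := Matrix.mul_nonsing_inv _ hdet
  have h2 : (SigN t)⁻¹ * SigN t = 1 := Matrix.nonsing_inv_mul _ hdet
  have h1' : ∀ M : Matrix (Fin d) (Fin d) ℝ, SigN t * ((SigN t)⁻¹ * M) = M := fun M => by
    rw [← Matrix.mul_assoc, h1, Matrix.one_mul]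
  have h2' : ∀ M : Matrix (Fin d) (Fin d) ℝ, (SigN t)⁻¹ * (SigN t * M) = M := fun M => by
    rw [← Matrix.mul_assoc, h2, Matrix.one_mul]
  have key : GN t * SigN t + SigN t * (GN t)ᵀ
      = A * SigN t + SigN t * Aᵀ + σB * σBᵀ - SigN t * Cᵀ * C * SigN t := by
    rw [hGN, hKN]
    simp only [Matrix.transpose_add, Matrix.transpose_sub, Matrix.transpose_smul,
      Matrix.transpose_mul, Matrix.transpose_transpose, Matrix.transpose_nonsing_inv,
      hSymm, hOm]
    simp only [Matrix.add_mul, Matrix.sub_mul, Matrix.mul_add, Matrix.mul_sub,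
      Matrix.smul_mul, Matrix.mul_smul, Matrix.mul_neg, Matrix.neg_mul,
      Matrix.mul_assoc, h1, h2, h1', h2', Matrix.mul_one, Matrix.one_mul]
    module
  have h := hScov t
  rwa [key] at h
end
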